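/- Fix k ≥ 1 and t > 0. The series u(x,t) = Σ_{n=0}^∞ (f_k^{(n)}(t)/(2n)!) x^{2n}, where f_k(t) = exp(-t^{-2k}), converges absolutely and uniformly on every compact subset of ℝ. -/

import Mathlib

open scoped Nat ENNReal

lemma tychonoff_deriv_bound (k : ℕ) (t : ℝ) (ht : 0 < t) :
    ∃ C r : ℝ, 0 < C ∧ 0 < r ∧ ∀ n : ℕ,
      |iteratedDeriv n (fun s : ℝ => Real.exp (-1 / s ^ (2 * k))) t| ≤ C * n ! / r ^ n := by
  have hana : AnalyticAt ℝ (fun s : ℝ => Real.exp (-1 / s ^ (2 * k))) t := by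
    exact AnalyticAt.rexp ((analyticAt_const).div ((analyticAt_id).pow _) (pow_ne_zero _ ht.ne'))
  obtain ⟨p, hp⟩ := hana
  obtain ⟨R, hR⟩ := hp
  have hrad : (0 : ℝ≥0∞) < p.radius := lt_of_lt_of_le hR.r_pos hR.r_le
  obtain ⟨r, hr0, hrr⟩ := ENNReal.lt_iff_exists_nnreal_btwn.mp hrad
  obtain ⟨C, hC, hCb⟩ := p.norm_mul_pow_le_of_lt_radius hrr
  refine ⟨C, r, hC, by exact_mod_cast hr0, fun n => ?_⟩
  have hfac := hR.factorial_smul (1 : ℝ) n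
  have h1 : iteratedDeriv n (fun s : ℝ => Real.exp (-1 / s ^ (2 * k))) t
      = (n ! : ℝ) • p n (fun _ => (1 : ℝ)) := by
    rw [iteratedDeriv_eq_iteratedFDeriv, ← hfac]
    simp [nsmul_eq_mul]
  have h2 : |p n (fun _ => (1 : ℝ))| ≤ ‖p n‖ := by
    have := (p n).le_opNorm (fun _ => (1 : ℝ))
    simpa using this
  have hrpos : (0 : ℝ) < (r : ℝ) := by exact_mod_cast hr0
  have h3 : |p n (fun _ => (1 : ℝ))| ≤ C / (r : ℝ) ^ n := by
    rw [le_div_iff₀ (by positivity)]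
    exact le_trans (mul_le_mul_of_nonneg_right h2 (by positivity)) (hCb n)
  rw [h1, smul_eq_mul, abs_mul, abs_of_nonneg (by positivity : (0:ℝ) ≤ (n ! : ℝ)),
    mul_comm C _, mul_div_assoc]
  exact mul_le_mul_of_nonneg_left h3 (by positivity)

lemma tychonoff_term_bound (C r : ℝ) (hC : 0 < C) (hr : 0 < r) {B x d : ℝ} (hx : |x| ≤ B)
    (n : ℕ) (hd : |d| ≤ C * n ! / r ^ n) :
    |d / ((2 * n).factorial : ℝ) * x ^ (2 * n)| ≤ C * (B ^ 2 / r) ^ n / n ! := by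
  have hB : 0 ≤ B := le_trans (abs_nonneg x) hx
  have hfac : ((n ! : ℝ)) * (n ! : ℝ) ≤ ((2 * n).factorial : ℝ) := by
    have := Nat.factorial_mul_factorial_dvd_factorial_add n n
    have h := Nat.le_of_dvd (Nat.factorial_pos _) this
    rw [show n + n = 2 * n by ring] at h
    exact_mod_cast h
  have hxB : |x| ^ (2 * n) ≤ B ^ (2 * n) := pow_le_pow_left₀ (abs_nonneg x) hx _
  have h2n : (0 : ℝ) < ((2 * n).factorial : ℝ) := by positivity
  have hnf : (0 : ℝ) < (n ! : ℝ) := by positivity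
  calc |d / ((2 * n).factorial : ℝ) * x ^ (2 * n)|
      = |d| / ((2 * n).factorial : ℝ) * |x| ^ (2 * n) := by
        rw [abs_mul, abs_div, abs_pow, abs_of_nonneg h2n.le]
    _ ≤ (C * n ! / r ^ n) / ((2 * n).factorial : ℝ) * B ^ (2 * n) := by
        gcongr
    _ ≤ (C * n ! / r ^ n) / ((n ! : ℝ) * n !) * B ^ (2 * n) := by
        gcongr
    _ = C * (B ^ 2 / r) ^ n / n ! := by
        rw [div_pow, pow_mul]
        field_simp
        try ring


theorem tychonoff_series_converges (k : ℕ) (hk : 1 ≤ k) (t : ℝ) (ht : 0 < t) :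
    (∀ x : ℝ, Summable (fun n : ℕ =>
        |iteratedDeriv n (fun s : ℝ => Real.exp (-1 / s ^ (2 * k))) t
          / ((2 * n).factorial : ℝ) * x ^ (2 * n)|)) ∧
    (∀ K : Set ℝ, IsCompact K →
      TendstoUniformlyOn
        (fun (N : ℕ) (x : ℝ) => ∑ n ∈ Finset.range N,
          iteratedDeriv n (fun s : ℝ => Real.exp (-1 / s ^ (2 * k))) t
            / ((2 * n).factorial : ℝ) * x ^ (2 * n))
        (fun x : ℝ => ∑' n : ℕ,
          iteratedDeriv n (fun s : ℝ => Real.exp (-1 / s ^ (2 * k))) t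
            / ((2 * n).factorial : ℝ) * x ^ (2 * n))
        Filter.atTop K) := by
  obtain ⟨C, r, hC, hr, hbound⟩ := tychonoff_deriv_bound k t ht
  constructor
  · intro x
    have hsum := (Real.summable_pow_div_factorial (x ^ 2 / r)).mul_left C
    refine Summable.of_nonneg_of_le (fun n => abs_nonneg _) (fun n => ?_) hsum
    have h := tychonoff_term_bound C r hC hr (le_refl |x|) n (hbound n)
    rw [sq_abs] at h
    rw [← mul_div_assoc]
    exact h
  · intro K hK
    obtain ⟨B, hB⟩ := hK.isBounded.subset_closedBall 0
    have hsum : Summable (fun n : ℕ => C * (B ^ 2 / r) ^ n / (n ! : ℝ)) := by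
      simpa [mul_div_assoc] using (Real.summable_pow_div_factorial (B ^ 2 / r)).mul_left C
    refine tendstoUniformlyOn_tsum_nat hsum fun n x hx => ?_
    have hxB : |x| ≤ B := by simpa using hB hx
    have h := tychonoff_term_bound C r hC hr hxB n (hbound n)
    rw [Real.norm_eq_abs]
    exact h
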